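/- Let N ≥ 0 and let P be a polynomial over ℚ in the variables y₀, …, y_N, x, q. For a formal power series G in the two variables x and ε over ℚ, let Ĝⱼ denote the series obtained from G by substituting (1-ε)ʲ·x for x, and set H(G) = P(Ĝ₀, Ĝ₁, …, Ĝ_N, x, 1-ε). Suppose G and G' both satisfy H(G) = 0 and H(G') = 0, their ε⁰-coefficients coincide and equal g₀(x), and the power series (∑_{k=0}^{N} ∂_{y_k}P)(g₀(x), …, g₀(x), x, 1) is invertible in ℚ⟦x⟧. Then G = G'. -/

import Mathlib

/-- The coefficient `gᵢ(x) ∈ ℚ⟦x⟧` of `εⁱ` in a formal power series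
`G ∈ ℚ⟦x, ε⟧`, modelled as an element of `(ℚ⟦ε⟧)⟦x⟧`. -/
noncomputable def epsCoeff (i : ℕ) (G : PowerSeries (PowerSeries ℚ)) : PowerSeries ℚ :=
  PowerSeries.mk fun m =>
    PowerSeries.coeff i (PowerSeries.coeff m G)

/-- `H(G) = P(Ĝ₀, Ĝ₁, …, Ĝ_N, x, 1-ε)`, where `Ĝⱼ` is obtained from `G` by
substituting `(1-ε)ʲ·x` for `x`.  Variables: `Sum.inl k` is `y_k`, `Sum.inr 0`
is `x` and `Sum.inr 1` is `q`. -/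
noncomputable def qSubst (N : ℕ) (P : MvPolynomial (Fin (N + 1) ⊕ Fin 2) ℚ)
    (G : PowerSeries (PowerSeries ℚ)) : PowerSeries (PowerSeries ℚ) :=
  MvPolynomial.aeval
    (Sum.elim
      (fun k : Fin (N + 1) =>
        PowerSeries.rescale ((1 - PowerSeries.X : PowerSeries ℚ) ^ (k : ℕ)) G)
      (fun j : Fin 2 =>
        if j = 0 then PowerSeries.X
        else PowerSeries.C (R := PowerSeries ℚ) (1 - PowerSeries.X))) P

/-- Evaluation of a polynomial in the variables `y₀, …, y_N, x, q` at
`(g₀(x), …, g₀(x), x, 1)`, as an element of `ℚ⟦x⟧`. -/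
noncomputable def diagEval (N : ℕ) (g0 : PowerSeries ℚ)
    (Q : MvPolynomial (Fin (N + 1) ⊕ Fin 2) ℚ) : PowerSeries ℚ :=
  MvPolynomial.aeval
    (Sum.elim (fun _ : Fin (N + 1) => g0)
      (fun j : Fin 2 => if j = 0 then PowerSeries.X else 1)) Q

noncomputable section
open PowerSeries

namespace Stmt3Aux

abbrev S := PowerSeries (PowerSeries ℚ)

lemma coeff_mul_of_dvd {n : ℕ} (v w : PowerSeries ℚ) (h : (X : PowerSeries ℚ)^n ∣ w) :
    PowerSeries.coeff n (v * w) = constantCoeff v * PowerSeries.coeff n w := by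
  rw [PowerSeries.coeff_mul, Finset.sum_eq_single (0, n)]
  · simp [coeff_zero_eq_constantCoeff]
  · rintro ⟨i, j⟩ hmem hne
    have hij : i + j = n := Finset.HasAntidiagonal.mem_antidiagonal.mp hmem
    have hj : j < n := by
      rcases Nat.lt_or_ge j n with h' | h'
      · exact h'
      · exfalso; apply hne
        have hi : i = 0 := by omega
        have hjn : j = n := by omega
        simp [hi, hjn]
    rw [X_pow_dvd_iff.mp h j hj, mul_zero]
  · intro h'; exact absurd (Finset.HasAntidiagonal.mem_antidiagonal.mpr (by simp)) h'

def ordIdeal (n : ℕ) : Ideal S where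
  carrier := {f | ∀ m, (X : PowerSeries ℚ)^n ∣ PowerSeries.coeff m f}
  add_mem' := fun hf hg m => by rw [map_add]; exact dvd_add (hf m) (hg m)
  zero_mem' := fun m => by simp
  smul_mem' := fun c f hf m => by
    rw [smul_eq_mul, PowerSeries.coeff_mul]
    exact Finset.dvd_sum fun p _ => (hf p.2).mul_left _

lemma mul_mem_ordIdeal {n₁ n₂ : ℕ} {f g : S} (hf : f ∈ ordIdeal n₁) (hg : g ∈ ordIdeal n₂) :
    f * g ∈ ordIdeal (n₁ + n₂) := fun m => by
  rw [PowerSeries.coeff_mul]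
  refine Finset.dvd_sum fun p _ => ?_
  rw [pow_add]
  exact mul_dvd_mul (hf p.1) (hg p.2)

lemma ordIdeal_mono {n₁ n₂ : ℕ} (h : n₁ ≤ n₂) : ordIdeal n₂ ≤ ordIdeal n₁ :=
  fun _f hf m => (pow_dvd_pow _ h).trans (hf m)

lemma epsCoeff_sub (i : ℕ) (f g : S) : epsCoeff i (f - g) = epsCoeff i f - epsCoeff i g := by
  ext m; simp [epsCoeff]

lemma epsCoeff_sum {α : Type*} (s : Finset α) (i : ℕ) (f : α → S) :
    epsCoeff i (∑ a ∈ s, f a) = ∑ a ∈ s, epsCoeff i (f a) := by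
  ext m; simp [epsCoeff]

lemma epsCoeff_zero (i : ℕ) : epsCoeff i 0 = 0 := by
  ext m; simp [epsCoeff]

lemma epsCoeff_eq_zero {n : ℕ} {f : S} (hf : f ∈ ordIdeal (n+1)) : epsCoeff n f = 0 := by
  ext m
  simp only [epsCoeff, PowerSeries.coeff_mk, map_zero]
  exact X_pow_dvd_iff.mp (hf m) n (Nat.lt_succ_self n)

lemma epsCoeff_mul {n : ℕ} (c d : S) (hd : d ∈ ordIdeal n) :
    epsCoeff n (c * d) = epsCoeff 0 c * epsCoeff n d := by
  ext m
  simp only [epsCoeff, PowerSeries.coeff_mk]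
  rw [PowerSeries.coeff_mul (R := PowerSeries ℚ), map_sum, PowerSeries.coeff_mul]
  refine Finset.sum_congr rfl fun p _ => ?_
  rw [coeff_mul_of_dvd _ _ (hd p.2)]
  simp [coeff_zero_eq_constantCoeff]

lemma epsCoeff_rescale {n : ℕ} (a : PowerSeries ℚ) (ha : constantCoeff a = 1) {f : S}
    (hf : f ∈ ordIdeal n) : epsCoeff n (rescale a f) = epsCoeff n f := by
  ext m
  simp only [epsCoeff, PowerSeries.coeff_mk, coeff_rescale]
  rw [coeff_mul_of_dvd _ _ (hf m), map_pow, ha, one_pow, one_mul]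

lemma rescale_mem {n : ℕ} (a : PowerSeries ℚ) {f : S} (hf : f ∈ ordIdeal n) :
    rescale a f ∈ ordIdeal n := fun m => by
  rw [coeff_rescale]; exact (hf m).mul_left _

def eps0 : S →ₐ[ℚ] PowerSeries ℚ :=
  { PowerSeries.map (PowerSeries.constantCoeff (R := ℚ)) with
    commutes' := fun r => by
      simp [PowerSeries.algebraMap_apply, PowerSeries.map_C] }

lemma eps0_eq (f : S) : eps0 f = epsCoeff 0 f := by
  ext m
  simp [eps0, epsCoeff, PowerSeries.coeff_map, coeff_zero_eq_constantCoeff]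
  rfl

/-- the value map used in `qSubst` -/
def qVals (N : ℕ) (G : S) : (Fin (N + 1) ⊕ Fin 2) → S :=
  Sum.elim
    (fun k : Fin (N + 1) => rescale ((1 - X : PowerSeries ℚ) ^ (k : ℕ)) G)
    (fun j : Fin 2 => if j = 0 then X else C (R := PowerSeries ℚ) (1 - X))

lemma constantCoeff_one_sub_X_pow (k : ℕ) :
    constantCoeff ((1 - X : PowerSeries ℚ) ^ k) = 1 := by
  rw [map_pow, map_sub, map_one, constantCoeff_X, sub_zero, one_pow]

lemma eps0_qVals (N : ℕ) (G : S) (g0 : PowerSeries ℚ) (h0 : epsCoeff 0 G = g0) :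
    (fun v => eps0 (qVals N G v)) =
      Sum.elim (fun _ : Fin (N + 1) => g0)
        (fun j : Fin 2 => if j = 0 then (X : PowerSeries ℚ) else 1) := by
  funext v
  rcases v with k | j
  · show eps0 (rescale ((1 - X : PowerSeries ℚ) ^ (k : ℕ)) G) = g0
    rw [eps0_eq, ← h0]
    ext m
    simp only [epsCoeff, PowerSeries.coeff_mk, coeff_rescale]
    rw [PowerSeries.coeff_mul, Finset.sum_eq_single ((0 : ℕ), (0 : ℕ))]
    · simp [coeff_zero_eq_constantCoeff, constantCoeff_one_sub_X_pow]
    · rintro ⟨i, j⟩ hmem hne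
      have hij : i + j = 0 := Finset.HasAntidiagonal.mem_antidiagonal.mp hmem
      have hi : i = 0 := by omega
      have hj : j = 0 := by omega
      subst hi; subst hj; exact absurd rfl hne
    · intro h'; exact absurd (Finset.HasAntidiagonal.mem_antidiagonal.mpr (by simp)) h'
  · rcases Fin.exists_fin_two.mp ⟨j, rfl⟩ with h | h
    all_goals subst h
    · show eps0 (X : S) = X
      exact PowerSeries.map_X _
    · show eps0 (C (R := PowerSeries ℚ) (1 - X)) = 1
      show PowerSeries.map (constantCoeff (R := ℚ)) (C (R := PowerSeries ℚ) (1 - X)) = 1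
      rw [PowerSeries.map_C, map_sub, map_one, constantCoeff_X, sub_zero, map_one]

lemma eps0_aeval (N : ℕ) (G : S) (g0 : PowerSeries ℚ) (h0 : epsCoeff 0 G = g0)
    (Q : MvPolynomial (Fin (N + 1) ⊕ Fin 2) ℚ) :
    epsCoeff 0 (MvPolynomial.aeval (qVals N G) Q) = diagEval N g0 Q := by
  rw [← eps0_eq]
  have h1 : eps0 (MvPolynomial.aeval (qVals N G) Q)
      = MvPolynomial.aeval (fun v => eps0 (qVals N G v)) Q :=
    DFunLike.congr_fun (MvPolynomial.comp_aeval (qVals N G) eps0) Q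
  rw [h1, eps0_qVals N G g0 h0]
  rfl

lemma taylor_mem {σ : Type*} [Fintype σ] [DecidableEq σ] {A : Type*} [CommRing A] [Algebra ℚ A]
    (J : Ideal A) (a b : σ → A) (h : ∀ k, a k - b k ∈ J) (P : MvPolynomial σ ℚ) :
    MvPolynomial.aeval a P - MvPolynomial.aeval b P
      - ∑ k, MvPolynomial.aeval b (MvPolynomial.pderiv k P) * (a k - b k) ∈ J * J := by
  induction P using MvPolynomial.induction_on with
  | C r => simp
  | add p q hp hq =>
      have hm := (J*J).add_mem hp hq
      convert hm using 1
      simp only [map_add, add_mul, Finset.sum_add_distrib]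
      ring
  | mul_X p i hp =>
      have hS : (∑ k, MvPolynomial.aeval b (MvPolynomial.pderiv k p) * (a k - b k)) ∈ J :=
        Ideal.sum_mem _ fun k _ => J.mul_mem_left _ (h k)
      have hAB : MvPolynomial.aeval a p - MvPolynomial.aeval b p ∈ J := by
        have h1 : MvPolynomial.aeval a p - MvPolynomial.aeval b p
            = (MvPolynomial.aeval a p - MvPolynomial.aeval b p
                - ∑ k, MvPolynomial.aeval b (MvPolynomial.pderiv k p) * (a k - b k))
              + ∑ k, MvPolynomial.aeval b (MvPolynomial.pderiv k p) * (a k - b k) := by ring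
        rw [h1]
        exact J.add_mem (Ideal.mul_le_left hp) hS
      have hmem : (MvPolynomial.aeval a p - MvPolynomial.aeval b p) * (a i - b i)
          + b i * (MvPolynomial.aeval a p - MvPolynomial.aeval b p
              - ∑ k, MvPolynomial.aeval b (MvPolynomial.pderiv k p) * (a k - b k)) ∈ J * J :=
        (J*J).add_mem (Ideal.mul_mem_mul hAB (h i)) (Ideal.mul_mem_left _ _ hp)
      convert hmem using 1
      have hsum : ∀ k, MvPolynomial.aeval b (MvPolynomial.pderiv k (p * MvPolynomial.X i)) * (a k - b k)
          = MvPolynomial.aeval b (MvPolynomial.pderiv k p) * (a k - b k) * b i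
            + (if i = k then MvPolynomial.aeval b p * (a k - b k) else 0) := by
        intro k
        rw [MvPolynomial.pderiv_mul, MvPolynomial.pderiv_X, map_add, map_mul, map_mul,
          MvPolynomial.aeval_X, Pi.single_apply]
        split <;> simp <;> ring
      rw [map_mul, map_mul, MvPolynomial.aeval_X, MvPolynomial.aeval_X,
        Finset.sum_congr rfl (fun k _ => hsum k), Finset.sum_add_distrib,
        Finset.sum_ite_eq, if_pos (Finset.mem_univ i), ← Finset.sum_mul]
      ring

end Stmt3Aux

end


open Stmt3Aux PowerSeries in
/-- If `G` and `G'` both satisfy the `q`-algebraic functional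
equation `H(G) = 0`, their `ε⁰`-coefficients coincide (equal to `g₀(x)`), and
`(∑_k ∂_{y_k}P)(g₀, …, g₀, x, 1)` is invertible in `ℚ⟦x⟧`, then `G = G'`. -/
theorem stmt_3 (N : ℕ)
    (P : MvPolynomial (Fin (N + 1) ⊕ Fin 2) ℚ)
    (G G' : PowerSeries (PowerSeries ℚ))
    (hG : qSubst N P G = 0) (hG' : qSubst N P G' = 0)
    (g0 : PowerSeries ℚ) (h0 : epsCoeff 0 G = g0) (h0' : epsCoeff 0 G' = g0)
    (hunit : IsUnit (diagEval N g0
      (∑ k : Fin (N + 1), MvPolynomial.pderiv (Sum.inl k) P))) :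
    G = G' := by
  suffices hall : ∀ i, epsCoeff i G = epsCoeff i G' by
    refine PowerSeries.ext fun m => PowerSeries.ext fun i => ?_
    have h := congrArg (PowerSeries.coeff m) (hall i)
    simpa [epsCoeff] using h
  intro i
  induction i using Nat.strong_induction_on with
  | _ n ih =>
  rcases n with _ | n
  · rw [h0, h0']
  · -- difference lies in ordIdeal (n+1)
    have hdiff : G - G' ∈ ordIdeal (n+1) := by
      intro m
      rw [X_pow_dvd_iff]
      intro j hj
      have h := congrArg (PowerSeries.coeff m) (ih j hj)
      simp only [epsCoeff, PowerSeries.coeff_mk] at h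
      simp [h]
    have hdv : ∀ v, qVals N G v - qVals N G' v ∈ ordIdeal (n+1) := by
      rintro (k | j)
      · show rescale _ G - rescale _ G' ∈ _
        rw [← map_sub]
        exact rescale_mem _ hdiff
      · simp only [qVals, Sum.elim_inr, sub_self]
        exact zero_mem _
    have htay := taylor_mem (ordIdeal (n+1)) (qVals N G) (qVals N G') hdv P
    have hG0 : MvPolynomial.aeval (qVals N G) P = 0 := hG
    have hG0' : MvPolynomial.aeval (qVals N G') P = 0 := hG'
    rw [hG0, hG0'] at htay
    have hsum_mem : (∑ k, MvPolynomial.aeval (qVals N G') (MvPolynomial.pderiv k P)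
        * (qVals N G k - qVals N G' k)) ∈ ordIdeal (n+2) := by
      have hJJ : ordIdeal (n+1) * ordIdeal (n+1) ≤ ordIdeal (n+2) := by
        rw [Ideal.mul_le]
        intro f hf g hg
        exact ordIdeal_mono (by omega) (mul_mem_ordIdeal hf hg)
      have h2 := hJJ htay
      have h3 := (ordIdeal (n+2)).neg_mem h2
      simpa using h3
    have hz : epsCoeff (n+1) (∑ k, MvPolynomial.aeval (qVals N G') (MvPolynomial.pderiv k P)
        * (qVals N G k - qVals N G' k)) = 0 := epsCoeff_eq_zero hsum_mem
    rw [epsCoeff_sum, Fintype.sum_sum_type] at hz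
    have hinl : ∀ k : Fin (N+1),
        epsCoeff (n+1) (MvPolynomial.aeval (qVals N G') (MvPolynomial.pderiv (Sum.inl k) P)
          * (qVals N G (Sum.inl k) - qVals N G' (Sum.inl k)))
        = diagEval N g0 (MvPolynomial.pderiv (Sum.inl k) P)
          * (epsCoeff (n+1) G - epsCoeff (n+1) G') := by
      intro k
      rw [epsCoeff_mul _ _ (hdv (Sum.inl k)), eps0_aeval N G' g0 h0']
      congr 1
      show epsCoeff (n+1) (rescale ((1 - X : PowerSeries ℚ) ^ (k : ℕ)) G
        - rescale ((1 - X : PowerSeries ℚ) ^ (k : ℕ)) G') = _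
      rw [← map_sub, epsCoeff_rescale _ (constantCoeff_one_sub_X_pow _) hdiff, epsCoeff_sub]
    have hinr : ∀ j : Fin 2,
        epsCoeff (n+1) (MvPolynomial.aeval (qVals N G') (MvPolynomial.pderiv (Sum.inr j) P)
          * (qVals N G (Sum.inr j) - qVals N G' (Sum.inr j))) = 0 := by
      intro j
      have h4 : qVals N G (Sum.inr j) - qVals N G' (Sum.inr j) = 0 := sub_self _
      rw [h4, mul_zero, epsCoeff_zero]
    rw [Finset.sum_congr rfl (fun k _ => hinl k), Finset.sum_congr rfl (fun j _ => hinr j),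
      Finset.sum_const_zero, add_zero, ← Finset.sum_mul] at hz
    have hd2 : diagEval N g0 (∑ k : Fin (N+1), MvPolynomial.pderiv (Sum.inl k) P)
        * (epsCoeff (n+1) G - epsCoeff (n+1) G') = 0 := by
      have h5 : diagEval N g0 (∑ k : Fin (N+1), MvPolynomial.pderiv (Sum.inl k) P)
          = ∑ k : Fin (N+1), diagEval N g0 (MvPolynomial.pderiv (Sum.inl k) P) := by
        unfold diagEval; rw [map_sum]
      rw [h5]
      exact hz
    have hD : epsCoeff (n+1) G - epsCoeff (n+1) G' = 0 :=
      (IsUnit.mul_right_eq_zero hunit).mp hd2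
    exact sub_eq_zero.mp hD
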